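/- Let α < 0, k ≥ 2, and let (Π̄_t), (Q̄_t) be sequences of probability distributions on {1,…,k} with Π̄_t(1) → 1 and D_α(Π̄_t, Q̄_t) < ε for all t, where D_α(P,Q) = (∑_i P(i)^α Q(i)^{1−α} − 1)/(α(α−1)). Then Q̄_t(1) → 1. -/
import Mathlib


open Filter

theorem neg_alpha_divergence_concentration_transfer
    (k : ℕ) (hk : 2 ≤ k) (α ε : ℝ) (hα : α < 0) (hε : 0 < ε)
    (P Q : ℕ → Fin k → ℝ)
    (hP0 : ∀ t i, 0 ≤ P t i) (hQ0 : ∀ t i, 0 ≤ Q t i)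
    (hPsum : ∀ t, ∑ i, P t i = 1) (hQsum : ∀ t, ∑ i, Q t i = 1)
    (hPlim : Filter.Tendsto (fun t => P t ⟨0, by omega⟩) Filter.atTop (nhds 1))
    (habs : ∀ t i, P t i = 0 → Q t i = 0)
    (hD : ∀ t, ((∑ i, P t i ^ α * Q t i ^ (1 - α)) - 1) / (α * (α - 1)) < ε) :
    Filter.Tendsto (fun t => Q t ⟨0, by omega⟩) Filter.atTop (nhds 1) := by
  have hα1 : 0 < α * (α - 1) := mul_pos_of_neg_of_neg hα (by linarith)
  set i0 : Fin k := ⟨0, by omega⟩ with hi0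
  set C : ℝ := ε * (α * (α - 1)) + 1 with hC
  have hC1 : 1 < C := by nlinarith [mul_pos hε hα1]
  have hS : ∀ t, ∑ i, P t i ^ α * Q t i ^ (1 - α) < C := by
    intro t
    have h := hD t
    rw [div_lt_iff₀ hα1] at h
    linarith
  rw [Metric.tendsto_atTop]
  intro δ hδ
  have hk0 : (0:ℝ) < k := by positivity
  set d : ℝ := δ / k with hd
  have hdpos : 0 < d := div_pos hδ hk0
  have hdα : (0:ℝ) < d ^ (1 - α) := Real.rpow_pos_of_pos hdpos _
  set M : ℝ := C / d ^ (1 - α) with hM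
  have hMpos : 0 < M := div_pos (by linarith) hdα
  set η : ℝ := M ^ (1 / α) with hη
  have hηpos : 0 < η := Real.rpow_pos_of_pos hMpos _
  have hev : ∀ᶠ t in atTop, 1 - η < P t i0 :=
    hPlim.eventually (eventually_gt_nhds (by linarith))
  rw [eventually_atTop] at hev
  obtain ⟨N, hN⟩ := hev
  refine ⟨N, fun t ht => ?_⟩
  have hPt := hN t ht
  have hQle1 : Q t i0 ≤ 1 := by
    rw [← hQsum t]
    exact Finset.single_le_sum (fun i _ => hQ0 t i) (Finset.mem_univ i0)
  have key : 1 - δ < Q t i0 := by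
    by_contra hcon
    push_neg at hcon
    have hsplitQ : Q t i0 + ∑ i ∈ Finset.univ.erase i0, Q t i = 1 := by
      rw [← hQsum t]; exact Finset.add_sum_erase _ _ (Finset.mem_univ i0)
    have hsplitP : P t i0 + ∑ i ∈ Finset.univ.erase i0, P t i = 1 := by
      rw [← hPsum t]; exact Finset.add_sum_erase _ _ (Finset.mem_univ i0)
    have hcard : (Finset.univ.erase i0).card = k - 1 := by
      rw [Finset.card_erase_of_mem (Finset.mem_univ i0), Finset.card_univ, Fintype.card_fin]
    have hcast : ((k - 1 : ℕ) : ℝ) = (k : ℝ) - 1 := by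
      push_cast [Nat.cast_sub (by omega : 1 ≤ k)]; ring
    have hsumconst : ∑ _i ∈ Finset.univ.erase i0, d < ∑ i ∈ Finset.univ.erase i0, Q t i := by
      rw [Finset.sum_const, hcard, nsmul_eq_mul, hcast]
      have h1 : ((k:ℝ) - 1) * (δ / k) < δ := by
        rw [mul_comm, div_mul_eq_mul_div, div_lt_iff₀ hk0]
        nlinarith
      linarith
    obtain ⟨i, hi_mem, hi⟩ := Finset.exists_lt_of_sum_lt hsumconst
    have hiP : 0 < P t i := by
      rcases lt_or_eq_of_le (hP0 t i) with h | h
      · exact h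
      · exact absurd (habs t i h.symm) (by nlinarith)
    have hPle : P t i ≤ 1 - P t i0 := by
      have := Finset.single_le_sum (fun j _ => hP0 t j) hi_mem
      linarith
    have h1P : 0 < 1 - P t i0 := lt_of_lt_of_le hiP hPle
    have hterm1 : (1 - P t i0) ^ α ≤ P t i ^ α :=
      Real.rpow_le_rpow_of_nonpos hiP hPle hα.le
    have hterm2 : M < (1 - P t i0) ^ α := by
      have := Real.rpow_lt_rpow_of_neg h1P (show 1 - P t i0 < η by linarith) hα
      rwa [hη, ← Real.rpow_mul hMpos.le, one_div, inv_mul_cancel₀ (ne_of_lt hα), Real.rpow_one] at this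
    have hterm3 : d ^ (1 - α) ≤ Q t i ^ (1 - α) :=
      Real.rpow_le_rpow hdpos.le hi.le (by linarith)
    have hT : C < P t i ^ α * Q t i ^ (1 - α) := by
      have hMC : M * d ^ (1 - α) = C := div_mul_cancel₀ _ (ne_of_gt hdα)
      nlinarith [Real.rpow_nonneg (hP0 t i) α]
    have hTsum : P t i ^ α * Q t i ^ (1 - α) ≤ ∑ j, P t j ^ α * Q t j ^ (1 - α) :=
      Finset.single_le_sum
        (fun j _ => mul_nonneg (Real.rpow_nonneg (hP0 t j) _) (Real.rpow_nonneg (hQ0 t j) _))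
        (Finset.mem_univ i)
    have := hS t
    linarith
  rw [Real.dist_eq, abs_lt]
  constructor <;> linarith
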